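/- Let q : (0,∞) → ℝ be C¹ and suppose there exists x₀ ≥ 1 with q(x) < 0 for all x ≥ x₀. Define Q(y) = 2∫₁^y q(x) dx for y ≥ 1. If ∫_{x₀}^∞ 1/q(x) dx = −∞ and limsup_{x→∞} q′(x)/q(x)² < ∞, then ∫₁^∞ e^{−Q(y)} (∫_y^∞ e^{Q(z)} dz) dy = ∞ (i.e., condition (H3) fails). -/

import Mathlib

open MeasureTheory Set Filter

/-- Backward growth bound for `u = -1/q` from the bound on `q'/q²`. -/
private lemma stmt10_lemA (q : ℝ → ℝ) (hq : ContDiffOn ℝ 1 q (Ioi 0))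
    (x₀ b C : ℝ) (hx₀ : 1 ≤ x₀) (hbx : x₀ ≤ b)
    (hqneg : ∀ x ≥ x₀, q x < 0)
    (hCb : ∀ x ≥ b, deriv q x / (q x) ^ 2 ≤ C) :
    ∀ y z : ℝ, b ≤ y → y ≤ z → -(1 / q z) - -(1 / q y) ≤ C * (z - y) := by
  have hb1 : (1:ℝ) ≤ b := le_trans hx₀ hbx
  have hqd : ∀ x : ℝ, 0 < x → HasDerivAt q (deriv q x) x := by
    intro x hx
    have h1 : DifferentiableOn ℝ q (Ioi 0) := hq.differentiableOn one_ne_zero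
    exact ((h1 x hx).differentiableAt (isOpen_Ioi.mem_nhds hx)).hasDerivAt
  have huderiv : ∀ x, x₀ ≤ x →
      HasDerivAt (fun t => -(1 / q t)) (deriv q x / (q x) ^ 2) x := by
    intro x hx
    have hx0 : (0:ℝ) < x := lt_of_lt_of_le (lt_of_lt_of_le one_pos hx₀) hx
    have hqne : q x ≠ 0 := (hqneg x hx).ne
    have h1 : HasDerivAt (fun y => (q y)⁻¹) (-(deriv q x) / (q x) ^ 2) x :=
      (hqd x hx0).inv hqne
    have h2 := h1.neg
    have h3 : -(-(deriv q x) / (q x) ^ 2) = deriv q x / (q x) ^ 2 := by ring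
    rw [h3] at h2
    have h4 : (fun t : ℝ => -(1 / q t)) = fun y => -(q y)⁻¹ := by
      funext y; simp [one_div]
    rw [h4]; exact h2
  intro y z hy hyz
  set g : ℝ → ℝ := fun t => C * t - -(1 / q t) with hgdef
  have hgd : ∀ t, b ≤ t → HasDerivAt g (C - deriv q t / (q t) ^ 2) t := by
    intro t ht
    have htx : x₀ ≤ t := le_trans hbx ht
    have h5 := ((hasDerivAt_id t).const_mul C).sub (huderiv t htx)
    have hg2 : g = fun x => C * x + (q x)⁻¹ := by
      funext x; simp [hgdef, one_div]
    rw [hg2]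
    have h7 : (fun x => C * x + (q x)⁻¹) = ((fun y => C * y) - fun t => -(q t)⁻¹) := by
      funext x; simp only [Pi.sub_apply]; ring
    rw [h7]
    simpa using h5
  have hmono : MonotoneOn g (Icc y z) := by
    apply monotoneOn_of_deriv_nonneg (convex_Icc y z)
    · intro t ht
      exact ((hgd t (le_trans hy ht.1)).continuousAt).continuousWithinAt
    · intro t ht
      rw [interior_Icc] at ht
      exact ((hgd t (le_trans hy (le_of_lt ht.1))).differentiableAt).differentiableWithinAt
    · intro t ht
      rw [interior_Icc] at ht
      have hb' : b ≤ t := le_trans hy (le_of_lt ht.1)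
      rw [(hgd t hb').deriv]
      have := hCb t hb'
      linarith
  have := hmono (left_mem_Icc.2 hyz) (right_mem_Icc.2 hyz) hyz
  simp only [hgdef] at this
  linarith

/-- Key exponential estimate: `Q z - Q y ≥ -2` on a short interval left of `z`. -/
private lemma stmt10_lemC (q u Q : ℝ → ℝ) (x₀ b C : ℝ)
    (hqc : ContinuousOn q (Ioi 0))
    (hqneg : ∀ x ≥ x₀, q x < 0)
    (hx₀ : 1 ≤ x₀) (hbx : x₀ ≤ b) (hb1 : (1:ℝ) ≤ b) (hC1 : (1:ℝ) ≤ C)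
    (hudef : u = fun x => -(1 / q x))
    (hupos : ∀ x, x₀ ≤ x → 0 < u x)
    (hQ : ∀ y, Q y = 2 * ∫ x in (1:ℝ)..y, q x)
    (lemA : ∀ y z : ℝ, b ≤ y → y ≤ z → u z - u y ≤ C * (z - y)) :
    ∀ z, b + 1 ≤ z → ∀ y ∈ Icc (z - min (u z) 1 / (2*C)) z, -2 ≤ Q z - Q y := by
  have hCpos : (0:ℝ) < C := lt_of_lt_of_le one_pos hC1
  have hqint : ∀ y z : ℝ, 0 < y → 0 < z → IntervalIntegrable q volume y z := by
    intro y z hy hz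
    apply ContinuousOn.intervalIntegrable
    apply hqc.mono
    intro t ht
    rcases ht with ⟨h1, _⟩
    have : (0:ℝ) < min y z := lt_min hy hz
    exact lt_of_lt_of_le this (by simpa using h1)
  intro z hz y hy
  set δ : ℝ := min (u z) 1 / (2*C) with hδdef
  have hxz : x₀ ≤ z := le_trans hbx (by linarith)
  have huz : 0 < u z := hupos z hxz
  have hδpos : 0 < δ := div_pos (lt_min huz one_pos) (by linarith)
  have hδle : δ ≤ 1 / 2 := by
    rw [hδdef, div_le_div_iff₀ (by linarith) (by norm_num)]
    have h1 : min (u z) 1 ≤ 1 := min_le_right _ _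
    nlinarith
  have hyb : b ≤ y := by
    rcases hy with ⟨h1, _⟩
    linarith
  have hy0 : (0:ℝ) < y := lt_of_lt_of_le (lt_of_lt_of_le one_pos hb1) hyb
  have hz0 : (0:ℝ) < z := by linarith
  have hqlb : ∀ t ∈ Icc y z, -(2 / u z) ≤ q t := by
    intro t ht
    have htb : b ≤ t := le_trans hyb ht.1
    have htx : x₀ ≤ t := le_trans hbx htb
    have hut : u z / 2 ≤ u t := by
      have h1 := lemA t z htb ht.2
      have h2 : z - t ≤ δ := by
        rcases hy with ⟨hy1, _⟩
        rcases ht with ⟨ht1, ht2⟩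
        linarith
      have h3 : C * (z - t) ≤ C * δ := mul_le_mul_of_nonneg_left h2 (le_of_lt hCpos)
      have h4 : C * δ ≤ min (u z) 1 / 2 := by
        have h6 : C * ((min (u z) 1) / (2 * C)) = min (u z) 1 / 2 := by
          field_simp
        rw [hδdef, h6]
      have h5 : min (u z) 1 ≤ u z := min_le_left _ _
      linarith
    have hut0 : 0 < u t := hupos t htx
    have hq0 : q t < 0 := hqneg t htx
    have hqt : q t = -(1 / u t) := by
      rw [hudef]; field_simp
    rw [hqt]
    have : 1 / u t ≤ 2 / u z := by
      rw [div_le_div_iff₀ hut0 (by linarith)]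
      linarith
    linarith
  have hint1 : ∫ x in y..z, q x ≥ -1 := by
    have h1 : ∫ x in y..z, (-(2 / u z)) ≤ ∫ x in y..z, q x := by
      apply intervalIntegral.integral_mono_on hy.2
      · exact intervalIntegrable_const
      · exact hqint y z hy0 hz0
      · exact hqlb
    rw [intervalIntegral.integral_const] at h1
    have h2 : (z - y) • (-(2 / u z)) ≥ -1 := by
      rw [smul_eq_mul]
      have hzy : z - y ≤ δ := by rcases hy with ⟨h1', _⟩; linarith
      have hzy0 : 0 ≤ z - y := by linarith [hy.2]
      have h3 : (z - y) * (2 / u z) ≤ δ * (2 / u z) :=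
        mul_le_mul_of_nonneg_right hzy (by positivity)
      have h4 : δ * (2 / u z) ≤ 1 := by
        rw [hδdef, div_mul_div_comm, div_le_one (by positivity)]
        have h5 : min (u z) 1 ≤ u z := min_le_left _ _
        nlinarith
      nlinarith
    linarith
  have hQdiff : Q z - Q y = 2 * ∫ x in y..z, q x := by
    rw [hQ z, hQ y]
    have h1 := intervalIntegral.integral_add_adjacent_intervals
      (hqint 1 y one_pos hy0) (hqint y z hy0 hz0)
    have h2 : ∫ x in (1:ℝ)..z, q x = (∫ x in (1:ℝ)..y, q x) + ∫ x in y..z, q x := h1.symm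
    rw [h2]; ring
  rw [hQdiff]
  linarith

/-- The truncated reciprocal `min u 1` has infinite integral on the tail. -/
private lemma stmt10_lemB (q : ℝ → ℝ) (u : ℝ → ℝ) (x₀ b C : ℝ)
    (hx₀ : 1 ≤ x₀) (hbx : x₀ ≤ b) (hb1 : (1:ℝ) ≤ b) (hC1 : (1:ℝ) ≤ C)
    (hudef : u = fun x => -(1 / q x))
    (hupos : ∀ x, x₀ ≤ x → 0 < u x)
    (hucont : ContinuousOn u (Ici x₀))
    (hint : (∫⁻ x in Ici x₀, ENNReal.ofReal (-(1 / q x))) = ⊤)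
    (lemA : ∀ y z : ℝ, b ≤ y → y ≤ z → u z - u y ≤ C * (z - y)) :
    (∫⁻ z in Ici (b+1), ENNReal.ofReal (min (u z) 1)) = ⊤ := by
  have hCpos : (0:ℝ) < C := lt_of_lt_of_le one_pos hC1
  have hintu : (∫⁻ x in Ici x₀, ENNReal.ofReal (u x)) = ⊤ := by
    rw [hudef]; exact hint
  have htail : (∫⁻ x in Ici (b+1), ENNReal.ofReal (u x)) = ⊤ := by
    have hsplit : Ico x₀ (b+1) ∪ Ici (b+1) = Ici x₀ := Ico_union_Ici_eq_Ici (by linarith)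
    have hdisj : Disjoint (Ico x₀ (b+1)) (Ici (b+1)) :=
      (Iio_disjoint_Ici le_rfl).mono_left Ico_subset_Iio_self
    have hunion := lintegral_union (measurableSet_Ici) hdisj
      (f := fun x => ENNReal.ofReal (u x)) (μ := volume) (A := Ico x₀ (b+1))
    rw [hsplit, hintu] at hunion
    obtain ⟨M, hM⟩ := (isCompact_Icc (a := x₀) (b := b+1)).exists_bound_of_continuousOn
      (hucont.mono Icc_subset_Ici_self)
    have hfin : (∫⁻ x in Ico x₀ (b+1), ENNReal.ofReal (u x)) ≠ ⊤ := by
      have h1 : (∫⁻ x in Ico x₀ (b+1), ENNReal.ofReal (u x)) ≤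
          ∫⁻ _ in Ico x₀ (b+1), ENNReal.ofReal M := by
        apply setLIntegral_mono' measurableSet_Ico
        intro x hx
        apply ENNReal.ofReal_le_ofReal
        exact le_trans (le_abs_self _) (hM x ⟨hx.1, le_of_lt hx.2⟩)
      have h2 : (∫⁻ _ in Ico x₀ (b+1), ENNReal.ofReal M) < ⊤ := by
        rw [setLIntegral_const]
        exact ENNReal.mul_lt_top ENNReal.ofReal_lt_top (by simp [Real.volume_Ico])
      exact ne_top_of_le_ne_top h2.ne h1
    by_contra hc
    exact (ENNReal.add_ne_top.2 ⟨hfin, hc⟩) hunion.symm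
  by_cases hbd : ∃ M : ℝ, ∀ z ≥ b+1, u z ≤ M
  · obtain ⟨M, hM⟩ := hbd
    set M' : ℝ := max M 1 with hM'
    have key : ∀ z ∈ Ici (b+1), ENNReal.ofReal (u z) ≤
        ENNReal.ofReal M' * ENNReal.ofReal (min (u z) 1) := by
      intro z hz
      have hz' : (b:ℝ)+1 ≤ z := hz
      have huz : 0 < u z := hupos z (by linarith)
      rw [← ENNReal.ofReal_mul (le_trans zero_le_one (le_max_right M 1))]
      apply ENNReal.ofReal_le_ofReal
      rcases le_total (u z) 1 with h | h
      · rw [min_eq_left h]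
        nlinarith [le_max_right M 1]
      · rw [min_eq_right h]
        simpa using le_trans (hM z hz') (le_max_left M 1)
    by_contra hc
    have h1 : (∫⁻ z in Ici (b+1), ENNReal.ofReal (u z)) ≤
        ENNReal.ofReal M' * ∫⁻ z in Ici (b+1), ENNReal.ofReal (min (u z) 1) := by
      calc (∫⁻ z in Ici (b+1), ENNReal.ofReal (u z))
          ≤ ∫⁻ z in Ici (b+1), ENNReal.ofReal M' * ENNReal.ofReal (min (u z) 1) :=
            setLIntegral_mono' measurableSet_Ici key
        _ = _ := lintegral_const_mul' _ _ ENNReal.ofReal_ne_top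
    rw [htail] at h1
    have h2 : ENNReal.ofReal M' * ∫⁻ z in Ici (b+1), ENNReal.ofReal (min (u z) 1) < ⊤ :=
      ENNReal.mul_lt_top ENNReal.ofReal_lt_top (lt_top_iff_ne_top.2 hc)
    exact h2.ne (top_le_iff.1 h1)
  · push_neg at hbd
    by_contra hc
    have hge : ∀ L : ℝ, 0 < L →
        ENNReal.ofReal L ≤ ∫⁻ z in Ici (b+1), ENNReal.ofReal (min (u z) 1) := by
      intro L hL
      obtain ⟨M₀, hM₀⟩ := (isCompact_Icc (a := b+1) (b := b+1+L)).exists_bound_of_continuousOn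
        (hucont.mono (fun t ht => le_trans (by linarith) ht.1))
      obtain ⟨z, hz1, hz2⟩ := hbd (max M₀ (1 + C * L))
      have huz : max M₀ (1 + C * L) < u z := hz2
      have hzL : b + 1 + L < z := by
        by_contra hzc
        push_neg at hzc
        have h1 := le_trans (le_abs_self _) (hM₀ z ⟨hz1, hzc⟩)
        have h2 := le_max_left M₀ (1 + C * L)
        linarith
      have hsub : Icc (z - L) z ⊆ Ici (b+1) := by
        intro t ht
        have := ht.1
        simp only [mem_Ici]
        linarith
      have hmin1 : ∀ t ∈ Icc (z - L) z, min (u t) 1 = 1 := by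
        intro t ht
        have htb : b ≤ t := by have := ht.1; linarith
        have h1 := lemA t z htb ht.2
        have h2 : C * (z - t) ≤ C * L := by
          apply mul_le_mul_of_nonneg_left _ (le_of_lt hCpos)
          have := ht.1; linarith
        have : (1:ℝ) ≤ u t := by
          have h3 := le_max_right M₀ (1 + C * L)
          linarith
        exact min_eq_right this
      calc ENNReal.ofReal L = ENNReal.ofReal 1 * volume (Icc (z-L) z) := by
            rw [Real.volume_Icc, show z - (z - L) = L by ring, ENNReal.ofReal_one, one_mul]
        _ = ∫⁻ _ in Icc (z-L) z, ENNReal.ofReal 1 := (setLIntegral_const _ _).symm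
        _ ≤ ∫⁻ t in Icc (z-L) z, ENNReal.ofReal (min (u t) 1) := by
            apply setLIntegral_mono' measurableSet_Icc
            intro t ht
            rw [hmin1 t ht]
        _ ≤ ∫⁻ z in Ici (b+1), ENNReal.ofReal (min (u z) 1) := lintegral_mono_set hsub
    have hcontr : ENNReal.ofReal
        ((∫⁻ z in Ici (b+1), ENNReal.ofReal (min (u z) 1)).toReal + 1) ≤
        ∫⁻ z in Ici (b+1), ENNReal.ofReal (min (u z) 1) := by
      apply hge
      positivity
    rw [ENNReal.ofReal_add ENNReal.toReal_nonneg zero_le_one,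
      ENNReal.ofReal_toReal hc] at hcontr
    have hlt : (∫⁻ z in Ici (b+1), ENNReal.ofReal (min (u z) 1)) <
        (∫⁻ z in Ici (b+1), ENNReal.ofReal (min (u z) 1)) + ENNReal.ofReal 1 :=
      ENNReal.lt_add_right hc (by simp)
    exact absurd hcontr (not_le.2 hlt)

/-- Final assembly of the double integral lower bound via Tonelli. -/
private lemma stmt10_main (q u : ℝ → ℝ) (Q : ℝ → ℝ) (x₀ b C : ℝ)
    (hx₀ : 1 ≤ x₀) (hbx : x₀ ≤ b) (hb1 : (1:ℝ) ≤ b) (hC1 : (1:ℝ) ≤ C)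
    (hupos : ∀ x, x₀ ≤ x → 0 < u x)
    (hQae : AEMeasurable Q (volume.restrict (Ici (1:ℝ))))
    (lemB : (∫⁻ z in Ici (b+1), ENNReal.ofReal (min (u z) 1)) = ⊤)
    (lemC : ∀ z, b + 1 ≤ z → ∀ y ∈ Icc (z - min (u z) 1 / (2*C)) z, -2 ≤ Q z - Q y) :
    (∫⁻ y in Ici (1:ℝ), ENNReal.ofReal (Real.exp (-Q y)) *
      ∫⁻ z in Ici y, ENNReal.ofReal (Real.exp (Q z))) = ⊤ := by
  have hCpos : (0:ℝ) < C := lt_of_lt_of_le one_pos hC1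
  set μ : Measure ℝ := volume.restrict (Ici (1:ℝ)) with hμ
  set f : ℝ → ENNReal := fun y => ENNReal.ofReal (Real.exp (-Q y)) with hf
  set g : ℝ → ENNReal := fun z => ENNReal.ofReal (Real.exp (Q z)) with hg
  have hfae : AEMeasurable f μ :=
    ENNReal.measurable_ofReal.comp_aemeasurable
      (Real.measurable_exp.comp_aemeasurable hQae.neg)
  have hgae : AEMeasurable g μ :=
    ENNReal.measurable_ofReal.comp_aemeasurable
      (Real.measurable_exp.comp_aemeasurable hQae)
  set Fp : ℝ × ℝ → ENNReal :=
    {p : ℝ × ℝ | p.1 ≤ p.2}.indicator (fun p => f p.1 * g p.2) with hFp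
  have hFpae : AEMeasurable Fp (μ.prod μ) := by
    apply AEMeasurable.indicator
    · exact (hfae.comp_quasiMeasurePreserving Measure.quasiMeasurePreserving_fst).mul
        (hgae.comp_quasiMeasurePreserving Measure.quasiMeasurePreserving_snd)
    · exact measurableSet_le measurable_fst measurable_snd
  have hstep1 : (∫⁻ y in Ici (1:ℝ), f y * ∫⁻ z in Ici y, g z) =
      ∫⁻ y, (∫⁻ z, Fp (y, z) ∂μ) ∂μ := by
    apply lintegral_congr_ae
    refine (ae_restrict_iff' measurableSet_Ici).2 ?_
    filter_upwards with y hy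
    have h1 : ∀ z : ℝ, Fp (y, z) = (Ici y).indicator (fun z => f y * g z) z := by
      intro z
      by_cases h : y ≤ z
      · simp [hFp, indicator_of_mem, h, mem_Ici.2 h, Set.mem_setOf_eq]
      · simp [hFp, indicator, h, mem_Ici]
    calc f y * ∫⁻ z in Ici y, g z
        = ∫⁻ z in Ici y, f y * g z := (lintegral_const_mul' _ _ ENNReal.ofReal_ne_top).symm
      _ = ∫⁻ z in Ici y, f y * g z ∂μ := by
          rw [hμ, Measure.restrict_restrict measurableSet_Ici,
            inter_eq_left.2 (Ici_subset_Ici.2 hy)]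
      _ = ∫⁻ z, Fp (y, z) ∂μ := by
          rw [← lintegral_indicator measurableSet_Ici]
          exact lintegral_congr fun z => (h1 z).symm
  rw [show (∫⁻ y in Ici (1:ℝ), ENNReal.ofReal (Real.exp (-Q y)) *
      ∫⁻ z in Ici y, ENNReal.ofReal (Real.exp (Q z))) =
      ∫⁻ y in Ici (1:ℝ), f y * ∫⁻ z in Ici y, g z from rfl, hstep1,
    lintegral_lintegral_swap (f := fun y z => Fp (y, z)) hFpae, eq_top_iff]
  have hofne : ENNReal.ofReal (Real.exp (-2)) ≠ 0 := by
    simp [ENNReal.ofReal_eq_zero, not_le, Real.exp_pos]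
  have hofne2 : ENNReal.ofReal ((2*C)⁻¹) ≠ 0 := by
    simp only [ne_eq, ENNReal.ofReal_eq_zero, not_le]
    positivity
  calc (⊤ : ENNReal)
      = ENNReal.ofReal (Real.exp (-2)) * (ENNReal.ofReal ((2*C)⁻¹) *
          ∫⁻ z in Ici (b+1), ENNReal.ofReal (min (u z) 1)) := by
        rw [lemB, ENNReal.mul_top hofne2, ENNReal.mul_top hofne]
    _ = ∫⁻ z in Ici (b+1), ENNReal.ofReal (Real.exp (-2)) *
          (ENNReal.ofReal ((2*C)⁻¹) * ENNReal.ofReal (min (u z) 1)) := by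
        rw [lintegral_const_mul' _ _ ENNReal.ofReal_ne_top,
          lintegral_const_mul' _ _ ENNReal.ofReal_ne_top]
    _ ≤ ∫⁻ z in Ici (b+1), (∫⁻ y, Fp (y, z) ∂μ) := by
        apply setLIntegral_mono' measurableSet_Ici
        intro z hz
        have hz' : b + 1 ≤ z := hz
        set δ : ℝ := min (u z) 1 / (2*C) with hδ
        have huz : 0 < u z := hupos z (by linarith)
        have hδpos : 0 < δ := div_pos (lt_min huz one_pos) (by linarith)
        have hδle : δ ≤ 1/2 := by
          rw [hδ, div_le_div_iff₀ (by linarith) (by norm_num)]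
          nlinarith [min_le_right (u z) 1]
        have h1 : ENNReal.ofReal ((2*C)⁻¹) * ENNReal.ofReal (min (u z) 1) =
            ENNReal.ofReal δ := by
          rw [← ENNReal.ofReal_mul (by positivity)]
          congr 1
          rw [hδ]; ring
        rw [h1]
        calc ENNReal.ofReal (Real.exp (-2)) * ENNReal.ofReal δ
            = ENNReal.ofReal (Real.exp (-2)) * volume (Icc (z - δ) z) := by
              rw [Real.volume_Icc, show z - (z - δ) = δ by ring]
          _ = ∫⁻ _ in Icc (z - δ) z, ENNReal.ofReal (Real.exp (-2)) :=
              (setLIntegral_const _ _).symm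
          _ ≤ ∫⁻ y in Icc (z - δ) z, Fp (y, z) := by
              apply setLIntegral_mono' measurableSet_Icc
              intro y hy
              have hyz : y ≤ z := hy.2
              have h2 : Fp (y, z) = ENNReal.ofReal (Real.exp (Q z - Q y)) := by
                rw [hFp, indicator_of_mem (show (y,z) ∈ {p : ℝ×ℝ | p.1 ≤ p.2} from hyz)]
                show ENNReal.ofReal (Real.exp (-Q y)) * ENNReal.ofReal (Real.exp (Q z)) = _
                rw [← ENNReal.ofReal_mul (le_of_lt (Real.exp_pos _)), ← Real.exp_add]
                congr 2
                ring
              rw [h2]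
              exact ENNReal.ofReal_le_ofReal (Real.exp_le_exp.2 (lemC z hz' y hy))
          _ ≤ ∫⁻ y, Fp (y, z) ∂μ := by
              apply lintegral_mono'
              · rw [hμ]
                apply Measure.restrict_mono _ le_rfl
                intro t ht
                have := ht.1
                simp only [mem_Ici]
                linarith
              · exact le_rfl
    _ ≤ ∫⁻ z, (∫⁻ y, Fp (y, z) ∂μ) ∂μ := by
        apply lintegral_mono'
        · rw [hμ]
          apply Measure.restrict_mono _ le_rfl
          intro t ht
          have : b + 1 ≤ t := ht
          simp only [mem_Ici]
          linarith
        · exact le_rfl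

set_option maxHeartbeats 1000000 in
/-- For `q` C¹ on `(0,∞)`, negative on `[x₀,∞)`, with
`∫_{x₀}^∞ dx/q(x) = -∞` and `limsup_{x→∞} q'(x)/q(x)² < ∞`, condition (H3) fails:
`∫₁^∞ e^{-Q(y)} ∫_y^∞ e^{Q(z)} dz dy = ∞`, where `Q(y) = 2∫₁^y q`. -/
theorem stmt10 (q : ℝ → ℝ) (hq : ContDiffOn ℝ 1 q (Ioi 0))
    (x₀ : ℝ) (hx₀ : 1 ≤ x₀) (hqneg : ∀ x ≥ x₀, q x < 0)
    (Q : ℝ → ℝ) (hQ : ∀ y, Q y = 2 * ∫ x in (1:ℝ)..y, q x)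
    (hint : (∫⁻ x in Ici x₀, ENNReal.ofReal (-(1 / q x))) = ⊤)
    (hlimsup : ∃ C : ℝ, ∀ᶠ x in atTop, deriv q x / (q x) ^ 2 ≤ C) :
    (∫⁻ y in Ici (1:ℝ), ENNReal.ofReal (Real.exp (-Q y)) *
      ∫⁻ z in Ici y, ENNReal.ofReal (Real.exp (Q z))) = ⊤ := by
  obtain ⟨C₀, hC₀⟩ := hlimsup
  rw [eventually_atTop] at hC₀
  obtain ⟨b₀, hb₀⟩ := hC₀
  set C : ℝ := max C₀ 1 with hCdef
  have hC1 : (1:ℝ) ≤ C := le_max_right _ _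
  set b : ℝ := max x₀ b₀ with hbdef
  have hbx : x₀ ≤ b := le_max_left _ _
  have hb1 : (1:ℝ) ≤ b := le_trans hx₀ hbx
  have hCb : ∀ x ≥ b, deriv q x / (q x) ^ 2 ≤ C :=
    fun x hx => le_trans (hb₀ x (le_trans (le_max_right _ _) hx)) (le_max_left _ _)
  clear_value C b
  have hqc : ContinuousOn q (Ioi 0) := hq.continuousOn
  set u : ℝ → ℝ := fun x => -(1 / q x) with hudef
  clear_value u
  have hupos : ∀ x, x₀ ≤ x → 0 < u x := by
    intro x hx
    have h := hqneg x hx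
    have : 1 / q x < 0 := div_neg_of_pos_of_neg one_pos h
    simp only [hudef]; linarith
  have lemA : ∀ y z : ℝ, b ≤ y → y ≤ z → u z - u y ≤ C * (z - y) := by
    simp only [hudef]
    exact stmt10_lemA q hq x₀ b C hx₀ hbx hqneg hCb
  have hucont : ContinuousOn u (Ici x₀) := by
    rw [hudef]
    apply ContinuousOn.neg
    apply ContinuousOn.div continuousOn_const
    · exact hqc.mono (fun x hx => lt_of_lt_of_le one_pos (le_trans hx₀ hx))
    · intro x hx
      exact (hqneg x hx).ne
  have lemB := stmt10_lemB q u x₀ b C hx₀ hbx hb1 hC1 hudef hupos hucont hint lemA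
  have lemC := stmt10_lemC q u Q x₀ b C hqc hqneg hx₀ hbx hb1 hC1 hudef hupos hQ lemA
  -- measurability of Q on [1, ∞)
  have hqint : ∀ y z : ℝ, 0 < y → 0 < z → IntervalIntegrable q volume y z := by
    intro y z hy hz
    apply ContinuousOn.intervalIntegrable
    apply hqc.mono
    intro t ht
    rcases ht with ⟨h1, _⟩
    have : (0:ℝ) < min y z := lt_min hy hz
    exact lt_of_lt_of_le this (by simpa using h1)
  have hP : ∀ y : ℝ, 0 < y → HasDerivAt (fun t => ∫ x in (1:ℝ)..t, q x) (q y) y := by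
    intro y hy
    exact intervalIntegral.integral_hasDerivAt_right (hqint 1 y one_pos hy)
      (ContinuousOn.stronglyMeasurableAtFilter isOpen_Ioi hqc y hy)
      (hqc.continuousAt (isOpen_Ioi.mem_nhds hy))
  have hQcont : ContinuousOn Q (Ioi 0) := by
    have hQeq : Q = fun y => 2 * ∫ x in (1:ℝ)..y, q x := funext hQ
    rw [hQeq]
    intro y hy
    exact (continuousAt_const.mul (hP y hy).continuousAt).continuousWithinAt
  have hQae : AEMeasurable Q (volume.restrict (Ici (1:ℝ))) := by
    have h1 : AEMeasurable Q ((volume.restrict (Ioi 0)).restrict (Ici 1)) :=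
      (hQcont.aemeasurable measurableSet_Ioi).restrict
    have h2 : (volume.restrict (Ioi 0)).restrict (Ici 1) = volume.restrict (Ici (1:ℝ)) := by
      rw [Measure.restrict_restrict measurableSet_Ici]
      congr 1
      exact inter_eq_left.2 (fun x hx => mem_Ioi.2 (lt_of_lt_of_le one_pos (mem_Ici.1 hx)))
    rw [h2] at h1
    exact h1
  exact stmt10_main q u Q x₀ b C hx₀ hbx hb1 hC1 hupos hQae lemB lemC
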